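/- Let G act transitively and freely on a set X (so X is a G-torsor with base point x₀), and let c : X → Fin k be a perfect surjective colouring with c(x₀) = 1. Then K₁ = {f ∈ G : c(f • x₀) = 1} is a subgroup of G of index k, and for each colour i, the set K_i = {f ∈ G : c(f • x₀) = i} is a left coset of K₁. -/
import Mathlib


/-- Every perfect surjective colouring of a `G`-torsor with base point `x₀` of colour `0`
arises from a subgroup `K₁` of index `k`: the colour classes are the left cosets of `K₁`. -/
theorem stmt_5 {G X : Type*} [Group G] [MulAction G X] {k : ℕ} [NeZero k]
    [MulAction.IsPretransitive G X]
    (hfree : ∀ (g : G) (x : X), g • x = x → g = 1)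
    (c : X → Fin k) (hc : Function.Surjective c)
    (hperf : ∀ g : G, ∃ π : Equiv.Perm (Fin k), ∀ x : X, c (g • x) = π (c x))
    (x₀ : X) (hx₀ : c x₀ = 0) :
    ∃ K : Subgroup G, (K : Set G) = {f : G | c (f • x₀) = 0} ∧ K.index = k ∧
      ∀ i : Fin k, ∃ f : G, {g : G | c (g • x₀) = i} = (fun s => f * s) '' (K : Set G) := by
  have key : ∀ f g : G, c (f • x₀) = c (g • x₀) ↔ c ((f⁻¹ * g) • x₀) = 0 := by
    intro f g
    obtain ⟨π, hπ⟩ := hperf f⁻¹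
    have h1 : c ((f⁻¹ * g) • x₀) = π (c (g • x₀)) := by rw [mul_smul]; exact hπ _
    have h2 : π (c (f • x₀)) = 0 := by
      rw [← hπ, ← mul_smul, inv_mul_cancel, one_smul, hx₀]
    constructor
    · intro h; rw [h1, ← h, h2]
    · intro h
      exact π.injective (by rw [h2, ← h1, h])
  have hsurj : ∀ i : Fin k, ∃ f : G, c (f • x₀) = i := by
    intro i
    obtain ⟨x, hx⟩ := hc i
    obtain ⟨f, hf⟩ := MulAction.exists_smul_eq G x₀ x
    exact ⟨f, by rw [hf, hx]⟩
  have inv0 : ∀ a : G, c (a • x₀) = 0 → c (a⁻¹ • x₀) = 0 := by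
    intro a ha
    have h : c (a • x₀) = c ((1 : G) • x₀) := by rw [one_smul, hx₀]; exact ha
    simpa using (key a 1).mp h
  refine ⟨{ carrier := {f : G | c (f • x₀) = 0},
            one_mem' := by simp [hx₀],
            mul_mem' := fun {a b} ha hb => by
              have h : c (a⁻¹ • x₀) = c (b • x₀) := (inv0 a ha).trans hb.symm
              simpa using (key a⁻¹ b).mp h,
            inv_mem' := fun {a} ha => inv0 a ha }, rfl, ?_, ?_⟩
  · -- index = k
    refine Nat.card_eq_of_equiv_fin
      (Equiv.ofBijective (Quotient.lift (fun g => c (g • x₀)) ?_) ⟨?_, ?_⟩)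
    · intro a b hab
      have hm := QuotientGroup.leftRel_apply.mp hab
      show c (a • x₀) = c (b • x₀)
      exact (key a b).mpr hm
    · intro a b
      induction a using QuotientGroup.induction_on with | H a =>
      induction b using QuotientGroup.induction_on with | H b =>
      intro h
      exact (QuotientGroup.eq).mpr ((key a b).mp h)

    · intro i
      obtain ⟨f, hf⟩ := hsurj i
      exact ⟨QuotientGroup.mk f, hf⟩
  · intro i
    obtain ⟨f, hf⟩ := hsurj i
    refine ⟨f, Set.ext fun g => ?_⟩
    simp only [Set.mem_setOf_eq, Set.mem_image, SetLike.mem_coe]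
    constructor
    · intro hg
      refine ⟨f⁻¹ * g, ?_, by group⟩
      exact (key f g).mp (hf.trans hg.symm)
    · rintro ⟨s, hs, rfl⟩
      have : c (f • x₀) = c ((f * s) • x₀) := (key f (f * s)).mpr (by simpa using hs)
      rw [← this, hf]
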